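/- arXiv:2109.04481 — 4 statements merged into one kernel-verified Lean document; each statement's English description precedes it below -/
import Mathlib

section
/- For positive semidefinite ρ, σ with ρ ≠ 0 and σ ≠ 0, the product R_max(ρ‖σ)·R_max(σ‖ρ) ≥ 1, with equality if and only if ρ and σ are proportional. -/
open scoped ENNReal NNReal ComplexOrder
open Matrix

variable {ι κ : Type*}

/-- Max-relative entropy (non-logarithmic): `inf { λ ≥ 0 : ρ ≤ λσ }`, with `inf ∅ = ∞`.
Here `A ≤ B` means `B - A` is positive semidefinite. -/
noncomputable def Rmax [Fintype ι] (ρ σ : Matrix ι ι ℂ) : ℝ≥0∞ :=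
  sInf {x : ℝ≥0∞ | ∃ l : ℝ≥0, x = (l : ℝ≥0∞) ∧ ((l : ℝ) • σ - ρ).PosSemidef}

/-- A state: positive semidefinite with unit trace. -/
def IsState [Fintype ι] (ρ : Matrix ι ι ℂ) : Prop :=
  ρ.PosSemidef ∧ ρ.trace = 1

/-- A pure state: a rank-one (idempotent) state. -/
def IsPure [Fintype ι] (φ : Matrix ι ι ℂ) : Prop :=
  φ.PosSemidef ∧ φ * φ = φ ∧ φ.trace = 1

/-- The cone generated by a set of states. -/
noncomputable def cone (F : Set (Matrix ι ι ℂ)) : Set (Matrix ι ι ℂ) :=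
  {x | ∃ (l : ℝ≥0) (σ : Matrix ι ι ℂ), σ ∈ F ∧ x = (l : ℝ) • σ}

/-- Projective robustness `Ω(ρ) = inf_{σ ∈ F} Rmax(ρ‖σ) Rmax(σ‖ρ)`. -/
noncomputable def Omega [Fintype ι] (F : Set (Matrix ι ι ℂ)) (ρ : Matrix ι ι ℂ) : ℝ≥0∞ :=
  ⨅ σ ∈ F, Rmax ρ σ * Rmax σ ρ

/-- Support of an operator, as the range of the associated linear map. -/
noncomputable def msupport [Fintype ι] (ρ : Matrix ι ι ℂ) : Submodule ℂ (ι → ℂ) :=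
  LinearMap.range ρ.mulVecLin

/-- A positive linear map on matrices. -/
def IsPosMap [Fintype ι] [Fintype κ] (E : Matrix ι ι ℂ →ₗ[ℂ] Matrix κ κ ℂ) : Prop :=
  ∀ ρ, ρ.PosSemidef → (E ρ).PosSemidef

/-- Maximal fidelity with the free set: `F_F(φ) = max_{σ ∈ F} ⟨φ|σ|φ⟩ = max_{σ ∈ F} Tr(φσ)`. -/
noncomputable def Ffree [Fintype ι] (F : Set (Matrix ι ι ℂ)) (φ : Matrix ι ι ℂ) : ℝ :=
  sSup {x : ℝ | ∃ σ ∈ F, x = ((φ * σ).trace).re}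
section Aux
variable [Fintype ι] [DecidableEq ι]
set_option linter.unusedSectionVars false

lemma smul_psd {M : Matrix ι ι ℂ} (hM : M.PosSemidef) {c : ℝ} (hc : 0 ≤ c) :
    (c • M).PosSemidef := by
  have h : c • M = (c : ℂ) • M := by ext i j; simp [Complex.real_smul]
  rw [h]
  refine PosSemidef.of_dotProduct_mulVec_nonneg ?_ ?_
  · show _ = _
    rw [conjTranspose_smul, hM.1.eq, Complex.star_def, Complex.conj_ofReal]
  · intro x
    rw [smul_mulVec, dotProduct_smul]
    exact mul_nonneg (by exact_mod_cast hc) (hM.dotProduct_mulVec_nonneg x)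

lemma psd_diag_nonneg {M : Matrix ι ι ℂ} (hM : M.PosSemidef) (i : ι) : 0 ≤ M i i := by
  have := hM.dotProduct_mulVec_nonneg (Pi.single i 1)
  simpa [mulVec_single, dotProduct, Pi.single_apply] using this

lemma psd_trace_nonneg {M : Matrix ι ι ℂ} (hM : M.PosSemidef) : 0 ≤ M.trace := by
  exact Finset.sum_nonneg fun i _ => psd_diag_nonneg hM i

lemma psd_eq_zero_of_trace {M : Matrix ι ι ℂ} (hM : M.PosSemidef) (h : M.trace = 0) :
    M = 0 := by
  have hd : ∀ i, M i i = 0 := by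
    intro i
    have := (Finset.sum_eq_zero_iff_of_nonneg (fun i _ => psd_diag_nonneg hM i)).mp h
    exact this i (Finset.mem_univ i)
  have hcol : ∀ i, M *ᵥ Pi.single i 1 = 0 := by
    intro i
    rw [← hM.dotProduct_mulVec_zero_iff]
    simpa [mulVec_single, dotProduct, Pi.single_apply] using hd i
  ext i j
  have := congrFun (hcol j) i
  simpa [mulVec_single] using this

lemma psd_antisymm {M : Matrix ι ι ℂ} (h1 : M.PosSemidef) (h2 : (-M).PosSemidef) :
    M = 0 := by
  apply psd_eq_zero_of_trace h1
  have a := psd_trace_nonneg h1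
  have b := psd_trace_nonneg h2
  rw [trace_neg, neg_nonneg] at b
  exact le_antisymm b a

set_option linter.unusedSectionVars false

def Tset (ρ σ : Matrix ι ι ℂ) : Set ℝ≥0 := {l | ((l : ℝ) • σ - ρ).PosSemidef}

lemma Rmax_eq (ρ σ : Matrix ι ι ℂ) : Rmax ρ σ = sInf ((↑) '' Tset ρ σ) := by
  unfold Rmax
  apply congrArg sInf
  ext x
  constructor
  · rintro ⟨l, rfl, h⟩; exact ⟨l, h, rfl⟩
  · rintro ⟨l, h, rfl⟩; exact ⟨l, rfl, h⟩

lemma Rmax_eq_top (ρ σ : Matrix ι ι ℂ) (h : Tset ρ σ = ∅) : Rmax ρ σ = ⊤ := by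
  rw [Rmax_eq, h]; simp

lemma Rmax_eq_coe (ρ σ : Matrix ι ι ℂ) (h : (Tset ρ σ).Nonempty) :
    Rmax ρ σ = ((sInf (Tset ρ σ) : ℝ≥0) : ℝ≥0∞) := by
  rw [Rmax_eq, ENNReal.coe_sInf h, sInf_image]

lemma cross {ρ σ : Matrix ι ι ℂ} (hρ : ρ.PosSemidef) (hρ0 : ρ ≠ 0) {l m : ℝ≥0}
    (hl : l ∈ Tset ρ σ) (hm : m ∈ Tset σ ρ) : 1 ≤ l * m := by
  by_contra h
  push_neg at h
  have hlt : (l : ℝ) * (m : ℝ) < 1 := by exact_mod_cast h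
  have h1 : (((l : ℝ) * (m : ℝ) - 1) • ρ).PosSemidef := by
    have := (smul_psd hm l.coe_nonneg).add hl
    convert this using 1
    module
  have h2 : (-(((l : ℝ) * (m : ℝ) - 1) • ρ)).PosSemidef := by
    have := smul_psd hρ (c := 1 - (l : ℝ) * (m : ℝ)) (by linarith)
    convert this using 1
    module
  have := psd_antisymm h1 h2
  rcases smul_eq_zero.mp this with hc | hc
  · linarith [hc]
  · exact hρ0 hc

lemma trace_lb {ρ σ : Matrix ι ι ℂ} {l : ℝ≥0} (hl : l ∈ Tset ρ σ) :
    ρ.trace.re ≤ (l : ℝ) * σ.trace.re := by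
  have h := psd_trace_nonneg hl
  rw [trace_sub, trace_smul] at h
  rw [Complex.le_def] at h
  have := h.1
  simpa [Complex.real_smul, Complex.mul_re] using this

lemma trace_pos {ρ : Matrix ι ι ℂ} (hρ : ρ.PosSemidef) (hρ0 : ρ ≠ 0) : 0 < ρ.trace.re := by
  have h := psd_trace_nonneg hρ
  rw [Complex.le_def] at h
  rcases lt_or_eq_of_le h.1 with h1 | h1
  · simpa using h1
  · exfalso
    apply hρ0
    apply psd_eq_zero_of_trace hρ
    apply Complex.ext <;> simp [← h1, ← h.2]

lemma sInf_mem_Tset {ρ σ : Matrix ι ι ℂ} (hρ : ρ.PosSemidef) (hσ : σ.PosSemidef)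
    (hne : (Tset ρ σ).Nonempty) : sInf (Tset ρ σ) ∈ Tset ρ σ := by
  set a := sInf (Tset ρ σ) with ha
  refine PosSemidef.of_dotProduct_mulVec_nonneg ?_ ?_
  · show _ = _
    rw [conjTranspose_sub, conjTranspose_smul, hρ.1.eq, hσ.1.eq, star_trivial]
  · intro x
    set c := star x ⬝ᵥ σ *ᵥ x with hcdef
    set d := star x ⬝ᵥ ρ *ᵥ x with hddef
    have hc := hσ.dotProduct_mulVec_nonneg x
    have hd := hρ.dotProduct_mulVec_nonneg x
    rw [Complex.le_def] at hc hd
    have key : ∀ l : ℝ≥0, l ∈ Tset ρ σ → d.re ≤ (l : ℝ) * c.re := by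
      intro l hl
      have h := (show ((l : ℝ) • σ - ρ).PosSemidef from hl).dotProduct_mulVec_nonneg x
      rw [sub_mulVec, smul_mulVec, dotProduct_sub, dotProduct_smul,
        Complex.le_def] at h
      have := h.1
      simpa [← hcdef, ← hddef, Complex.real_smul, Complex.mul_re] using this
    have main : d.re ≤ (a : ℝ) * c.re := by
      rcases eq_or_lt_of_le hc.1 with hc0 | hc0
      · obtain ⟨l, hl⟩ := hne
        have := key l hl
        rw [← hc0] at this ⊢
        simpa using this
      · apply le_of_forall_pos_le_add
        intro ε hε
        set δ : ℝ≥0 := (ε / c.re).toNNReal with hδ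
        have hδpos : 0 < δ := Real.toNNReal_pos.mpr (div_pos hε hc0)
        obtain ⟨l, hl, hlt⟩ := exists_lt_of_csInf_lt hne (lt_add_of_pos_right a hδpos)
        have h1 := key l hl
        have h2 : (l : ℝ) * c.re ≤ ((a : ℝ) + (δ : ℝ)) * c.re := by
          apply mul_le_mul_of_nonneg_right _ hc0.le
          exact_mod_cast hlt.le
        have h3 : (δ : ℝ) * c.re = ε := by
          rw [hδ, Real.coe_toNNReal _ (div_pos hε hc0).le, div_mul_eq_mul_div,
            mul_div_assoc, div_self (ne_of_gt hc0), mul_one]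
        nlinarith
    rw [sub_mulVec, smul_mulVec, dotProduct_sub, dotProduct_smul, Complex.le_def]
    constructor
    · simpa [← hcdef, ← hddef, Complex.real_smul, Complex.mul_re] using main
    · have hcim : c.im = 0 := by simpa using hc.2.symm
      have hdim : d.im = 0 := by simpa using hd.2.symm
      simp [← hcdef, ← hddef, Complex.real_smul, Complex.mul_im, hcim, hdim]

lemma Rmax_pos {ρ σ : Matrix ι ι ℂ} (hρ : ρ.PosSemidef) (hρ0 : ρ ≠ 0)
    (hσ : σ.PosSemidef) (hσ0 : σ ≠ 0) : Rmax ρ σ ≠ 0 := by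
  have htρ := trace_pos hρ hρ0
  have htσ := trace_pos hσ hσ0
  set b : ℝ≥0 := (ρ.trace.re / σ.trace.re).toNNReal with hb
  have hbpos : 0 < b := Real.toNNReal_pos.mpr (div_pos htρ htσ)
  have hle : (b : ℝ≥0∞) ≤ Rmax ρ σ := by
    rw [Rmax_eq]
    apply le_sInf
    rintro x ⟨m, hm, rfl⟩
    rw [ENNReal.coe_le_coe, ← NNReal.coe_le_coe, hb,
      Real.coe_toNNReal _ (div_pos htρ htσ).le, div_le_iff₀ htσ]
    exact trace_lb hm
  intro h0
  rw [h0, nonpos_iff_eq_zero, ENNReal.coe_eq_zero] at hle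
  exact hbpos.ne' hle

end Aux

/-- for nonzero positive semidefinite `ρ, σ`, `Rmax(ρ‖σ)·Rmax(σ‖ρ) ≥ 1`, with
equality iff `ρ` and `σ` are proportional. -/
theorem rmax_product_ge_one [Fintype ι] [DecidableEq ι]
    (ρ σ : Matrix ι ι ℂ) (hρ : ρ.PosSemidef) (hσ : σ.PosSemidef)
    (hρ0 : ρ ≠ 0) (hσ0 : σ ≠ 0) :
    1 ≤ Rmax ρ σ * Rmax σ ρ ∧
      (Rmax ρ σ * Rmax σ ρ = 1 ↔ ∃ c : ℝ, 0 < c ∧ ρ = c • σ) := by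
  have hprop_mem : ∀ c : ℝ, 0 < c → ρ = c • σ →
      c.toNNReal ∈ Tset ρ σ ∧ (1/c).toNNReal ∈ Tset σ ρ := by
    intro c hc hρσ
    constructor
    · show ((c.toNNReal : ℝ) • σ - ρ).PosSemidef
      rw [Real.coe_toNNReal _ hc.le, hρσ, sub_self]
      exact Matrix.PosSemidef.zero
    · show (((1/c).toNNReal : ℝ) • ρ - σ).PosSemidef
      rw [Real.coe_toNNReal _ (by positivity), hρσ, smul_smul,
        one_div_mul_cancel hc.ne', one_smul, sub_self]
      exact Matrix.PosSemidef.zero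
  rcases (Tset ρ σ).eq_empty_or_nonempty with h1 | h1
  · have htop : Rmax ρ σ * Rmax σ ρ = ⊤ := by
      rw [Rmax_eq_top ρ σ h1, ENNReal.top_mul (Rmax_pos hσ hσ0 hρ hρ0)]
    rw [htop]
    refine ⟨le_top, ?_, ?_⟩
    · intro h; exact absurd h ENNReal.top_ne_one
    · rintro ⟨c, hc, hcs⟩
      exact absurd ((hprop_mem c hc hcs).1) (by rw [h1]; exact not_false_iff.mpr trivial)
  rcases (Tset σ ρ).eq_empty_or_nonempty with h2 | h2
  · have htop : Rmax ρ σ * Rmax σ ρ = ⊤ := by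
      rw [Rmax_eq_top σ ρ h2, ENNReal.mul_top (Rmax_pos hρ hρ0 hσ hσ0)]
    rw [htop]
    refine ⟨le_top, ?_, ?_⟩
    · intro h; exact absurd h ENNReal.top_ne_one
    · rintro ⟨c, hc, hcs⟩
      exact absurd ((hprop_mem c hc hcs).2) (by rw [h2]; exact not_false_iff.mpr trivial)
  set a := sInf (Tset ρ σ) with hadef
  set b := sInf (Tset σ ρ) with hbdef
  have ha_mem : a ∈ Tset ρ σ := sInf_mem_Tset hρ hσ h1
  have hb_mem : b ∈ Tset σ ρ := sInf_mem_Tset hσ hρ h2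
  have hProd : Rmax ρ σ * Rmax σ ρ = ((a * b : ℝ≥0) : ℝ≥0∞) := by
    rw [Rmax_eq_coe ρ σ h1, Rmax_eq_coe σ ρ h2, ENNReal.coe_mul]
  have hge : 1 ≤ a * b := cross hρ hρ0 ha_mem hb_mem
  rw [hProd]
  refine ⟨by exact_mod_cast hge, ?_, ?_⟩
  · intro h
    have hab : a * b = 1 := by exact_mod_cast h
    have ha0 : a ≠ 0 := by
      intro h0; rw [h0, zero_mul] at hab; exact one_ne_zero hab.symm
    have habR : (a : ℝ) * (b : ℝ) = 1 := by exact_mod_cast hab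
    refine ⟨(a : ℝ), by positivity, ?_⟩
    have hpsd1 : ((a : ℝ) • σ - ρ).PosSemidef := ha_mem
    have hpsd2 : (ρ - (a : ℝ) • σ).PosSemidef := by
      have := smul_psd hb_mem a.coe_nonneg
      rwa [smul_sub, smul_smul, habR, one_smul] at this
    have := psd_antisymm hpsd2 (by rwa [neg_sub])
    rw [sub_eq_zero] at this
    exact this
  · rintro ⟨c, hc, hcs⟩
    obtain ⟨hm1, hm2⟩ := hprop_mem c hc hcs
    have hle1 : a ≤ c.toNNReal := csInf_le (OrderBot.bddBelow _) hm1
    have hle2 : b ≤ (1/c).toNNReal := csInf_le (OrderBot.bddBelow _) hm2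
    have hcc : c.toNNReal * (1/c).toNNReal = 1 := by
      apply NNReal.coe_injective
      push_cast [Real.coe_toNNReal _ hc.le, Real.coe_toNNReal _ (le_of_lt (by positivity : (0:ℝ) < 1/c))]
      field_simp
    have hub : a * b ≤ 1 := by
      calc a * b ≤ c.toNNReal * (1/c).toNNReal := mul_le_mul' hle1 hle2
      _ = 1 := hcc
    have : a * b = 1 := le_antisymm hub hge
    rw [this, ENNReal.coe_one]
end

section
/- Let F be a nonempty closed convex set of states and define the projective robustness Ω(ρ) := inf over σ ∈ F of R_max(ρ‖σ)·R_max(σ‖ρ). If E is a positive linear map such that E(σ) ∈ cone(F) for every σ ∈ F, and E(ρ) = pρ' for some p > 0 and state ρ', then Ω(ρ) ≥ Ω(ρ'). (Strong monotonicity of the projective robustness under probabilistic free transformations.) -/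
open scoped ENNReal NNReal ComplexOrder
open Matrix

variable {ι κ : Type*}

private lemma real_smul_eqX [Fintype ι] (r : ℝ) (M : Matrix ι ι ℂ) : r • M = (r : ℂ) • M := by
  ext i j; simp [Complex.real_smul]

private lemma psd_trace_nonnegX [Fintype ι] [DecidableEq ι] {M : Matrix ι ι ℂ} (h : M.PosSemidef) : 0 ≤ M.trace := by
  refine Finset.sum_nonneg fun i _ => ?_
  have := h.dotProduct_mulVec_nonneg (Pi.single i 1)
  simpa [dotProduct, Pi.single_apply, apply_ite] using this

private lemma psd_smulX [Fintype ι] {M : Matrix ι ι ℂ} (h : M.PosSemidef) {c : ℝ} (hc : 0 ≤ c) :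
    (c • M).PosSemidef := by
  rw [real_smul_eqX]
  rw [posSemidef_iff_dotProduct_mulVec]
  constructor
  · show _ᴴ = _
    rw [conjTranspose_smul, h.1.eq]
    congr 1
    simp [Complex.ext_iff]
  · intro x
    rw [smul_mulVec, dotProduct_smul, smul_eq_mul]
    exact mul_nonneg (by exact_mod_cast Complex.zero_le_real.mpr hc) (h.dotProduct_mulVec_nonneg x)

private lemma rmax_leX [Fintype ι] {ρ σ : Matrix ι ι ℂ} (l : ℝ≥0) (h : ((l : ℝ) • σ - ρ).PosSemidef) :
    Rmax ρ σ ≤ l := sInf_le ⟨l, rfl, h⟩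

private lemma one_le_rmaxX [Fintype ι] [DecidableEq ι] {ρ σ : Matrix ι ι ℂ} (hρ : IsState ρ) (hσ : IsState σ) :
    1 ≤ Rmax ρ σ := by
  refine le_sInf fun x hx => ?_
  obtain ⟨l, rfl, hl⟩ := hx
  have ht := psd_trace_nonnegX hl
  rw [trace_sub, trace_smul, hσ.2, hρ.2] at ht
  have h1 := (Complex.le_def.mp ht).1
  simp [Complex.real_smul] at h1
  exact_mod_cast h1

private lemma rmax_attainedX [Fintype ι] [DecidableEq ι] {ρ σ : Matrix ι ι ℂ} (hρ : ρ.PosSemidef) (hσ : σ.PosSemidef)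
    (h : Rmax ρ σ ≠ ⊤) : ∃ l : ℝ≥0, Rmax ρ σ = l ∧ ((l : ℝ) • σ - ρ).PosSemidef := by
  set S : Set ℝ≥0 := {l | ((l : ℝ) • σ - ρ).PosSemidef} with hSdef
  have hset : {x : ℝ≥0∞ | ∃ l : ℝ≥0, x = l ∧ ((l : ℝ) • σ - ρ).PosSemidef} = (↑) '' S := by
    ext x
    simp only [Set.mem_setOf_eq, Set.mem_image, hSdef]
    exact ⟨fun ⟨l, h1, h2⟩ => ⟨l, h2, h1.symm⟩, fun ⟨l, h2, h1⟩ => ⟨l, h1.symm, h2⟩⟩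
  have hne : S.Nonempty := by
    by_contra hemp
    rw [Set.not_nonempty_iff_eq_empty] at hemp
    apply h
    rw [Rmax, hset, hemp]
    simp
  refine ⟨sInf S, ?_, ?_⟩
  · rw [Rmax, hset, sInf_image, ← ENNReal.coe_sInf hne]
  · have key : ∀ (c : ℝ) (x : ι → ℂ), star x ⬝ᵥ ((c • σ - ρ) *ᵥ x)
        = (c : ℂ) * (star x ⬝ᵥ (σ *ᵥ x)) - star x ⬝ᵥ (ρ *ᵥ x) := by
      intro c x
      rw [real_smul_eqX, sub_mulVec, dotProduct_sub, smul_mulVec, dotProduct_smul,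
        smul_eq_mul]
    rw [posSemidef_iff_dotProduct_mulVec]
    constructor
    · show _ᴴ = _
      rw [conjTranspose_sub, conjTranspose_smul, hσ.1.eq, hρ.1.eq, star_trivial]
    · intro x
      set a := star x ⬝ᵥ (σ *ᵥ x) with hadef
      set b := star x ⬝ᵥ (ρ *ᵥ x) with hbdef
      have ha := Complex.le_def.mp (hσ.dotProduct_mulVec_nonneg x)
      have hb := Complex.le_def.mp (hρ.dotProduct_mulVec_nonneg x)
      rw [key]
      have hmain : b.re ≤ ((sInf S : ℝ≥0) : ℝ) * a.re := by
        have hformS : ∀ l ∈ S, b.re ≤ (l : ℝ) * a.re := by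
          intro l hl
          have := Complex.le_def.mp (hl.dotProduct_mulVec_nonneg x)
          rw [key] at this
          have h1 := this.1
          simp only [Complex.sub_re, Complex.mul_re, Complex.ofReal_re, Complex.ofReal_im,
            Complex.zero_re, ← ha.2, mul_zero, zero_mul, sub_zero] at h1
          linarith
        rcases eq_or_lt_of_le ha.1 with hz | hpos
        · obtain ⟨l₀, hl₀⟩ := hne
          have := hformS l₀ hl₀
          have hb0 : b.re ≤ 0 := by rw [← hz] at this; simpa using this
          have : b.re = 0 := le_antisymm hb0 (by simpa using hb.1)
          rw [this, ← hz]; simp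
        · have hdiv : Real.toNNReal (b.re / a.re) ≤ sInf S := by
            refine le_csInf hne fun l hl => ?_
            rw [Real.toNNReal_le_iff_le_coe]
            rw [div_le_iff₀ hpos]
            exact hformS l hl
          have h1 : b.re / a.re ≤ ((sInf S : ℝ≥0) : ℝ) :=
            le_trans (Real.le_coe_toNNReal _) (by exact_mod_cast hdiv)
          calc b.re ≤ (b.re / a.re) * a.re := by rw [div_mul_cancel₀]; exact ne_of_gt hpos
            _ ≤ ((sInf S : ℝ≥0) : ℝ) * a.re := by
                exact mul_le_mul_of_nonneg_right h1 (le_of_lt hpos)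
      refine Complex.le_def.mpr ⟨?_, ?_⟩
      · simp only [Complex.sub_re, Complex.mul_re, Complex.ofReal_re, Complex.ofReal_im,
          Complex.zero_re, ← ha.2, mul_zero, zero_mul, sub_zero]
        linarith
      · simp only [Complex.sub_im, Complex.mul_im, Complex.ofReal_re, Complex.ofReal_im,
          Complex.zero_im, ← ha.2, ← hb.2, mul_zero, zero_mul]
        ring

/-- strong monotonicity of the projective robustness: if a positive linear map `E`
maps `F` into `cone F` and `E(ρ) = pρ'` with `p > 0`, then `Ω(ρ) ≥ Ω(ρ')`. -/
theorem omega_strong_monotonicity [Fintype ι] [DecidableEq ι]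
    (F : Set (Matrix ι ι ℂ)) (hFne : F.Nonempty) (hFcl : IsClosed F)
    (hFconv : Convex ℝ F) (hFstate : ∀ σ ∈ F, IsState σ)
    (ρ ρ' : Matrix ι ι ℂ) (hρ : IsState ρ) (hρ' : IsState ρ')
    (E : Matrix ι ι ℂ →ₗ[ℂ] Matrix ι ι ℂ) (hE : IsPosMap E)
    (hEfree : ∀ σ ∈ F, E σ ∈ cone F)
    (p : ℝ) (hp : 0 < p) (hEρ : E ρ = p • ρ') :
    Omega F ρ' ≤ Omega F ρ := by
  rw [Omega]
  refine le_iInf₂ fun σ hσF => ?_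
  have hσS := hFstate σ hσF
  by_cases h1 : Rmax ρ σ = ⊤
  · rw [h1, ENNReal.top_mul (fun h0 => by simpa [h0] using one_le_rmaxX hσS hρ)]
    exact le_top
  by_cases h2 : Rmax σ ρ = ⊤
  · rw [h2, ENNReal.mul_top (fun h0 => by simpa [h0] using one_le_rmaxX hρ hσS)]
    exact le_top
  obtain ⟨lam, hlam_eq, hlam⟩ := rmax_attainedX hρ.1 hσS.1 h1
  obtain ⟨mu, hmu_eq, hmu⟩ := rmax_attainedX hσS.1 hρ.1 h2
  obtain ⟨l₀, τ, hτF, hEσ⟩ := hEfree σ hσF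
  have hτS := hFstate τ hτF
  have e1 : ∀ (a c : ℝ) (A B : Matrix ι ι ℂ), c ≠ 0 →
      (a / c) • A - B = c⁻¹ • (a • A - c • B) := by
    intro a c A B hc
    rw [smul_sub, smul_smul, smul_smul, inv_mul_cancel₀ hc, one_smul, div_eq_inv_mul]
  have hP1 : (((lam : ℝ) * (l₀ : ℝ)) • τ - p • ρ').PosSemidef := by
    have h := hE _ hlam
    rw [map_sub, real_smul_eqX, _root_.map_smul, hEσ, hEρ] at h
    convert h using 1
    ext i j
    simp [Complex.real_smul, Matrix.sub_apply, Matrix.smul_apply]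
    ring
  have ht := psd_trace_nonnegX hP1
  rw [trace_sub, trace_smul, trace_smul, hτS.2, hρ'.2] at ht
  have hple : p ≤ (lam : ℝ) * (l₀ : ℝ) := by
    have := (Complex.le_def.mp ht).1
    simpa [Complex.real_smul] using this
  have hl0' : (0 : ℝ) < (l₀ : ℝ) := by
    rcases eq_or_lt_of_le (l₀.coe_nonneg) with h0 | h0
    · exfalso; rw [← h0] at hple; simp at hple; linarith
    · exact h0
  have hl0 : l₀ ≠ 0 := by
    intro h0; rw [h0] at hl0'; simp at hl0'
  set qp : ℝ≥0 := ⟨p, hp.le⟩ with hqpdef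
  have hqp : qp ≠ 0 := by
    intro h0
    have : (qp : ℝ) = 0 := by rw [h0]; simp
    rw [hqpdef] at this
    change p = 0 at this
    linarith
  have hqpr : (qp : ℝ) = p := rfl
  have hq1 : ((lam * l₀ / qp : ℝ≥0) : ℝ) = (lam : ℝ) * (l₀ : ℝ) / p := by
    push_cast [hqpr]
    rfl
  have hpsd1 : (((lam * l₀ / qp : ℝ≥0) : ℝ) • τ - ρ').PosSemidef := by
    rw [hq1, e1 _ _ _ _ (ne_of_gt hp)]
    exact psd_smulX hP1 (inv_nonneg.mpr hp.le)
  have hP2 : (((mu : ℝ) * p) • ρ' - ((l₀ : ℝ)) • τ).PosSemidef := by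
    have h := hE _ hmu
    rw [map_sub, real_smul_eqX, _root_.map_smul, hEσ, hEρ] at h
    convert h using 1
    ext i j
    simp [Complex.real_smul, Matrix.sub_apply, Matrix.smul_apply]
    ring
  have hq2 : ((mu * qp / l₀ : ℝ≥0) : ℝ) = (mu : ℝ) * p / (l₀ : ℝ) := by
    push_cast [hqpr]
    rfl
  have hpsd2 : ((((mu * qp / l₀ : ℝ≥0)) : ℝ) • ρ' - τ).PosSemidef := by
    rw [hq2, e1 _ _ _ _ (ne_of_gt hl0')]
    exact psd_smulX hP2 (inv_nonneg.mpr hl0'.le)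
  calc Omega F ρ' ≤ Rmax ρ' τ * Rmax τ ρ' := iInf₂_le τ hτF
    _ ≤ (↑(lam * l₀ / qp) : ℝ≥0∞) * ↑(mu * qp / l₀) :=
        mul_le_mul' (rmax_leX _ hpsd1) (rmax_leX _ hpsd2)
    _ = ↑lam * ↑mu := by
        rw [← ENNReal.coe_mul, ← ENNReal.coe_mul]
        congr 1
        field_simp
    _ = Rmax ρ σ * Rmax σ ρ := by rw [hlam_eq, hmu_eq]
end

section
/- The projective robustness admits the primal cone formulation: Ω(ρ) = inf { γ ≥ 0 : ∃ σ̃ ∈ cone(F), ρ ≤ σ̃ ≤ γρ }. -/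
open scoped ENNReal NNReal ComplexOrder
open Matrix

variable {ι κ : Type*}

section Aux

variable [Fintype ι]

lemma psd_smul_real' {A : Matrix ι ι ℂ} (hA : A.PosSemidef) {c : ℝ} (hc : 0 ≤ c) :
    (c • A).PosSemidef := by
  refine Matrix.PosSemidef.of_dotProduct_mulVec_nonneg ?_ fun x => ?_
  · unfold Matrix.IsHermitian
    rw [conjTranspose_smul, hA.1, star_trivial]
  · rw [smul_mulVec, dotProduct_smul]
    exact smul_nonneg hc (hA.dotProduct_mulVec_nonneg x)

lemma psd_diag_nonneg' {A : Matrix ι ι ℂ} (hA : A.PosSemidef) [DecidableEq ι] (i : ι) :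
    0 ≤ A i i := by
  have := hA.dotProduct_mulVec_nonneg (Pi.single i 1)
  simpa [dotProduct, Pi.single_apply, mulVec, Finset.sum_ite_eq] using this

lemma psd_trace_re_nonneg' [DecidableEq ι] {A : Matrix ι ι ℂ} (hA : A.PosSemidef) :
    0 ≤ A.trace.re := by
  have h : (0:ℂ) ≤ A.trace := by
    rw [Matrix.trace]
    exact Finset.sum_nonneg fun i _ => psd_diag_nonneg' hA i
  exact (Complex.le_def.mp h).1

lemma one_le_of_psd' [DecidableEq ι] {ρ σ : Matrix ι ι ℂ} (hρ : IsState ρ) (hσ : IsState σ)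
    {l : ℝ≥0} (h : ((l : ℝ) • σ - ρ).PosSemidef) : 1 ≤ l := by
  have h0 := psd_trace_re_nonneg' h
  rw [trace_sub, trace_smul, hρ.2, hσ.2] at h0
  have h1 : (0:ℝ) ≤ (l:ℝ) - 1 := by
    simpa [Complex.real_smul] using h0
  have : (1:ℝ) ≤ (l:ℝ) := by linarith
  exact_mod_cast this

lemma Rmax_le' {ρ σ : Matrix ι ι ℂ} {l : ℝ≥0} (h : ((l : ℝ) • σ - ρ).PosSemidef) :
    Rmax ρ σ ≤ (l : ℝ≥0∞) :=
  sInf_le ⟨l, rfl, h⟩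

lemma one_le_Rmax' [DecidableEq ι] {ρ σ : Matrix ι ι ℂ} (hρ : IsState ρ) (hσ : IsState σ) :
    1 ≤ Rmax ρ σ := by
  refine le_sInf ?_
  rintro x ⟨l, rfl, h⟩
  exact_mod_cast one_le_of_psd' hρ hσ h

end Aux

/-- primal cone formulation:
`Ω(ρ) = inf { γ ≥ 0 : ∃ σ̃ ∈ cone(F), ρ ≤ σ̃ ≤ γρ }`. -/
theorem omega_primal_formulation [Fintype ι] [DecidableEq ι]
    (F : Set (Matrix ι ι ℂ)) (hFne : F.Nonempty) (hFcl : IsClosed F)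
    (hFconv : Convex ℝ F) (hFstate : ∀ σ ∈ F, IsState σ)
    (ρ : Matrix ι ι ℂ) (hρ : IsState ρ) :
    Omega F ρ = sInf {γ : ℝ≥0∞ | ∃ g : ℝ≥0, γ = (g : ℝ≥0∞) ∧
      ∃ σb ∈ cone F, (σb - ρ).PosSemidef ∧ ((g : ℝ) • ρ - σb).PosSemidef} := by
  apply le_antisymm
  · -- Ω ≤ sInf RHS
    refine le_sInf ?_
    rintro γ ⟨g, rfl, σb, ⟨l, σ, hσF, rfl⟩, h1, h2⟩
    have hσ := hFstate σ hσF
    have hl : l ≠ 0 := by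
      rintro rfl
      have := psd_trace_re_nonneg' h1
      rw [trace_sub] at this
      simp [hρ.2] at this
      norm_num at this
    have hl' : (l:ℝ) ≠ 0 := by exact_mod_cast hl
    have h2' : (((g / l : ℝ≥0) : ℝ) • ρ - σ).PosSemidef := by
      have key : ((g / l : ℝ≥0) : ℝ) • ρ - σ = ((l:ℝ))⁻¹ • ((g:ℝ) • ρ - (l:ℝ) • σ) := by
        rw [smul_sub, smul_smul, smul_smul, inv_mul_cancel₀ hl', one_smul]
        congr 1
        rw [NNReal.coe_div, inv_mul_eq_div]
      rw [key]
      exact psd_smul_real' h2 (inv_nonneg.mpr l.coe_nonneg)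
    calc Omega F ρ ≤ Rmax ρ σ * Rmax σ ρ := iInf₂_le σ hσF
      _ ≤ (l : ℝ≥0∞) * ((g / l : ℝ≥0) : ℝ≥0∞) := mul_le_mul' (Rmax_le' h1) (Rmax_le' h2')
      _ = (g : ℝ≥0∞) := by
          rw [← ENNReal.coe_mul, mul_comm, div_mul_cancel₀ _ hl]
  · -- sInf RHS ≤ Ω
    refine le_iInf fun σ => le_iInf fun hσF => ?_
    have hσ := hFstate σ hσF
    set S : Set ℝ≥0∞ := {x : ℝ≥0∞ | ∃ l : ℝ≥0, x = (l : ℝ≥0∞) ∧ ((l : ℝ) • σ - ρ).PosSemidef}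
      with hS_def
    set T : Set ℝ≥0∞ := {x : ℝ≥0∞ | ∃ l : ℝ≥0, x = (l : ℝ≥0∞) ∧ ((l : ℝ) • ρ - σ).PosSemidef}
      with hT_def
    have hRS : Rmax ρ σ = sInf S := rfl
    have hRT : Rmax σ ρ = sInf T := rfl
    have hRT1 : 1 ≤ Rmax σ ρ := one_le_Rmax' hσ hρ
    have hRS1 : 1 ≤ Rmax ρ σ := one_le_Rmax' hρ hσ
    have hRT0 : Rmax σ ρ ≠ 0 := by positivity
    have hRS0 : Rmax ρ σ ≠ 0 := by positivity
    rcases Set.eq_empty_or_nonempty S with hSe | hSne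
    · rw [hRS, hSe, sInf_empty, ENNReal.top_mul hRT0]
      exact le_top
    rcases Set.eq_empty_or_nonempty T with hTe | hTne
    · rw [hRT, hTe, sInf_empty, ENNReal.mul_top hRS0]
      exact le_top
    have hRTtop : Rmax σ ρ ≠ ⊤ := by
      obtain ⟨b, m, rfl, hm⟩ := hTne
      exact ne_top_of_le_ne_top ENNReal.coe_ne_top (Rmax_le' hm)
    -- rewrite product as double iInf
    conv_rhs => rw [hRS, sInf_eq_iInf', ENNReal.iInf_mul_of_ne hRT0 hRTtop]
    refine le_iInf fun a => ?_
    obtain ⟨l, hal, hl⟩ := a.2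
    have hl1 : 1 ≤ l := one_le_of_psd' hρ hσ hl
    have ha0 : (a : ℝ≥0∞) ≠ 0 := by
      rw [hal]; exact_mod_cast (lt_of_lt_of_le one_pos hl1).ne'
    have hatop : (a : ℝ≥0∞) ≠ ⊤ := by rw [hal]; exact ENNReal.coe_ne_top
    conv_rhs => rw [hRT, sInf_eq_iInf', ENNReal.mul_iInf_of_ne ha0 hatop]
    refine le_iInf fun b => ?_
    obtain ⟨m, hbm, hm⟩ := b.2
    rw [hal, hbm, ← ENNReal.coe_mul]
    refine sInf_le ⟨l * m, rfl, (l : ℝ) • σ, ⟨l, σ, hσF, rfl⟩, hl, ?_⟩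
    have key : ((l * m : ℝ≥0) : ℝ) • ρ - (l : ℝ) • σ = (l : ℝ) • ((m : ℝ) • ρ - σ) := by
      rw [smul_sub, smul_smul]
      push_cast
      ring_nf
    rw [key]
    exact psd_smul_real' hm l.coe_nonneg
end

section
/- Lower bound on Ω from fidelity with a pure state: for any state τ and pure state φ with ⟨φ|τ|φ⟩ ≥ 1 - ε and ε < 1 - F_F(φ), it holds that Ω(τ) ≥ (1-ε)(1 - F_F(φ)) / (ε · F_F(φ)). -/
open scoped ENNReal NNReal ComplexOrder
open Matrix

variable {ι κ : Type*}

lemma trace_re_nonneg_of_psd [Fintype ι] [DecidableEq ι] {A : Matrix ι ι ℂ}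
    (hA : A.PosSemidef) : 0 ≤ A.trace.re := by
  have h : ∀ i, 0 ≤ (A i i).re := by
    intro i
    have h0 := hA.dotProduct_mulVec_nonneg (Pi.single i 1)
    have he : star (Pi.single i 1 : ι → ℂ) ⬝ᵥ A.mulVec (Pi.single i 1) = A i i := by
      simp [Matrix.mulVec_single, Pi.single_apply, dotProduct, star_apply,
        Finset.sum_ite_eq', apply_ite]
    rw [he] at h0
    exact (Complex.nonneg_iff.mp h0).1
  rw [Matrix.trace, Complex.re_sum]
  exact Finset.sum_nonneg fun i _ => h i

open scoped MatrixOrder in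
lemma trace_mul_re_nonneg [Fintype ι] [DecidableEq ι] {A B : Matrix ι ι ℂ}
    (hA : A.PosSemidef) (hB : B.PosSemidef) : 0 ≤ ((A * B).trace).re := by
  have hA0 : 0 ≤ A := Matrix.nonneg_iff_posSemidef.mpr hA
  have heq : (A * B).trace = (CFC.sqrt A * B * CFC.sqrt A).trace := by
    conv_lhs => rw [← CFC.sqrt_mul_sqrt_self A hA0]
    rw [mul_assoc, Matrix.trace_mul_comm, mul_assoc]
  have hpsd : (CFC.sqrt A * B * CFC.sqrt A).PosSemidef := by
    have := hB.mul_mul_conjTranspose_same (CFC.sqrt A)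
    rwa [(Matrix.nonneg_iff_posSemidef.mp (CFC.sqrt_nonneg A)).1.eq] at this
  rw [heq]
  exact trace_re_nonneg_of_psd hpsd

/-- fidelity lower bound on the projective robustness:
`Ω(τ) ≥ (1-ε)(1-F_F(φ)) / (ε·F_F(φ))`. -/
theorem omega_lower_bound_from_fidelity [Fintype ι] [DecidableEq ι]
    (F : Set (Matrix ι ι ℂ)) (hFne : F.Nonempty) (hFcpt : IsCompact F)
    (hFconv : Convex ℝ F) (hFstate : ∀ σ ∈ F, IsState σ)
    (φ : Matrix ι ι ℂ) (hφ : IsPure φ)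
    (hFφ0 : 0 < Ffree F φ) (hFφ1 : Ffree F φ < 1)
    (τ : Matrix ι ι ℂ) (hτ : IsState τ)
    (ε : ℝ) (hε : ε < 1 - Ffree F φ) (hfid : 1 - ε ≤ ((φ * τ).trace).re) :
    ENNReal.ofReal ((1 - ε) * (1 - Ffree F φ) / (ε * Ffree F φ)) ≤ Omega F τ := by
  set Ff := Ffree F φ with hFf
  by_cases hε0 : 0 < ε
  case neg =>
    have hle : (1 - ε) * (1 - Ff) / (ε * Ff) ≤ 0 := by
      rcases eq_or_lt_of_le (le_of_not_gt hε0) with h | h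
      · rw [h]; simp
      · apply div_nonpos_of_nonneg_of_nonpos
        · nlinarith
        · nlinarith
    rw [ENNReal.ofReal_eq_zero.mpr hle]
    exact zero_le'
  -- main case: ε > 0
  have hεF : 1 - ε ≤ ((φ * τ).trace).re := hfid
  have h1φ : (1 - φ : Matrix ι ι ℂ).PosSemidef := by
    have hH : (1 - φ : Matrix ι ι ℂ)ᴴ = 1 - φ := by
      rw [conjTranspose_sub, conjTranspose_one, hφ.1.1.eq]
    have hsq : (1 - φ : Matrix ι ι ℂ)ᴴ * (1 - φ) = 1 - φ := by
      rw [hH, sub_mul, mul_sub, mul_sub, one_mul, mul_one, one_mul, hφ.2.1]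
      abel
    have := Matrix.posSemidef_conjTranspose_mul_self (1 - φ : Matrix ι ι ℂ)
    rwa [hsq] at this
  -- boundedness / upper bounds on trace fidelities
  have htr_le : ∀ ρ : Matrix ι ι ℂ, IsState ρ → ((φ * ρ).trace).re ≤ 1 := by
    intro ρ hρ
    have h0 := trace_mul_re_nonneg h1φ hρ.1
    have : ((1 - φ) * ρ).trace = ρ.trace - (φ * ρ).trace := by
      rw [sub_mul, one_mul, Matrix.trace_sub]
    rw [this, Complex.sub_re, hρ.2, Complex.one_re] at h0
    linarith
  have hbdd : BddAbove {x : ℝ | ∃ σ ∈ F, x = ((φ * σ).trace).re} := by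
    refine ⟨1, ?_⟩
    rintro x ⟨σ, hσ, rfl⟩
    exact htr_le σ (hFstate σ hσ)
  have hFσ_le : ∀ σ ∈ F, ((φ * σ).trace).re ≤ Ff := by
    intro σ hσ
    exact le_csSup hbdd ⟨σ, hσ, rfl⟩
  have h1ε : (0:ℝ) < 1 - ε := by linarith
  have h1F : (0:ℝ) < 1 - Ff := by linarith
  rw [Omega]
  refine le_iInf₂ fun σ hσ => ?_
  have hσst := hFstate σ hσ
  set tσ := ((φ * σ).trace).re with htσ
  set tτ := ((φ * τ).trace).re with htτ
  have key1 : ENNReal.ofReal ((1 - ε) / Ff) ≤ Rmax τ σ := by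
    refine le_sInf ?_
    rintro x ⟨l, rfl, hpsd⟩
    have h0 := trace_mul_re_nonneg hφ.1 hpsd
    have hexp : (φ * ((l : ℝ) • σ - τ)).trace.re = (l : ℝ) * tσ - tτ := by
      rw [mul_sub, mul_smul_comm, Matrix.trace_sub, Matrix.trace_smul, Complex.sub_re,
        Complex.smul_re, smul_eq_mul]
    rw [hexp] at h0
    have hl : (1 - ε) / Ff ≤ (l : ℝ) := by
      rw [div_le_iff₀ hFφ0]
      have := hFσ_le σ hσ
      nlinarith [l.coe_nonneg]
    calc ENNReal.ofReal ((1 - ε) / Ff) ≤ ENNReal.ofReal (l : ℝ) :=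
          ENNReal.ofReal_le_ofReal hl
      _ = (l : ℝ≥0∞) := ENNReal.ofReal_coe_nnreal
  have key2 : ENNReal.ofReal ((1 - Ff) / ε) ≤ Rmax σ τ := by
    refine le_sInf ?_
    rintro x ⟨l, rfl, hpsd⟩
    have h0 := trace_mul_re_nonneg h1φ hpsd
    have hexp : ((1 - φ) * ((l : ℝ) • τ - σ)).trace.re
        = (l : ℝ) * (1 - tτ) - (1 - tσ) := by
      rw [sub_mul, one_mul, mul_sub, mul_smul_comm]
      simp only [Matrix.trace_sub, Matrix.trace_smul, Complex.sub_re, Complex.smul_re,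
        hτ.2, hσst.2, Complex.one_re, smul_eq_mul]
      ring
    rw [hexp] at h0
    have hl : (1 - Ff) / ε ≤ (l : ℝ) := by
      rw [div_le_iff₀ hε0]
      have h1 := hFσ_le σ hσ
      nlinarith [l.coe_nonneg]
    calc ENNReal.ofReal ((1 - Ff) / ε) ≤ ENNReal.ofReal (l : ℝ) :=
          ENNReal.ofReal_le_ofReal hl
      _ = (l : ℝ≥0∞) := ENNReal.ofReal_coe_nnreal
  have hprod : ENNReal.ofReal ((1 - ε) * (1 - Ff) / (ε * Ff))
      = ENNReal.ofReal ((1 - ε) / Ff) * ENNReal.ofReal ((1 - Ff) / ε) := by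
    rw [← ENNReal.ofReal_mul (by positivity)]
    congr 1
    field_simp
  rw [hprod]
  exact mul_le_mul' key1 key2
end
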